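/- For any automorphisms σ₁, σ₂ of D_p, there is an automorphism ν of W such that λ ∘ ν = (σ₁ × σ₂) ∘ λ. -/

import Mathlib

open Function

noncomputable section

/-- A discrete group is a topological group. -/
instance (priority := 50) discreteTopologicalGroup (G : Type*) [Group G] [TopologicalSpace G]
    [DiscreteTopology G] : IsTopologicalGroup G where
  continuous_mul := continuous_of_discreteTopology
  continuous_inv := continuous_of_discreteTopology

/-- The sign epimorphism `τ : D_p → C_2 = {±1}` killing the rotations. -/
def dihedralSign (p : ℕ) : DihedralGroup p →* ℤˣ where
  toFun x := match x with
    | DihedralGroup.r _ => 1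
    | DihedralGroup.sr _ => -1
  map_one' := rfl
  map_mul' a b := by cases a <;> cases b <;> rfl

/-- `{±1}` acts on a commutative group by exponentiation (i.e. `-1` acts by inversion). -/
def unitsIntAut (A : Type*) [CommGroup A] : ℤˣ →* MulAut A where
  toFun u :=
    { toFun := fun x => x ^ (u : ℤ)
      invFun := fun x => x ^ (u : ℤ)
      left_inv := fun x => by rcases Int.units_eq_one_or u with h | h <;> simp [h]
      right_inv := fun x => by rcases Int.units_eq_one_or u with h | h <;> simp [h]
      map_mul' := fun x y => mul_zpow x y _ }
  map_one' := by ext x; simp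
  map_mul' u v := by
    ext x
    rcases Int.units_eq_one_or u with h | h <;>
      rcases Int.units_eq_one_or v with h' | h' <;>
        simp [h, h']

/-- The action of `D_p × D_p` on `C_q` given by `(x,y) · g = g^(τ(x)τ(y))`. -/
def Wact (p q : ℕ) : DihedralGroup p × DihedralGroup p →* MulAut (Multiplicative (ZMod q)) :=
  (unitsIntAut (Multiplicative (ZMod q))).comp
    (((dihedralSign p).comp (MonoidHom.fst _ _)) * ((dihedralSign p).comp (MonoidHom.snd _ _)))

/-- The group `W = C_q ⋊ (D_p × D_p)`. -/
abbrev Wgrp (p q : ℕ) : Type :=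
  SemidirectProduct (Multiplicative (ZMod q)) (DihedralGroup p × DihedralGroup p) (Wact p q)

/-- The quotient map `λ : W → D_p × D_p`. -/
abbrev lamW (p q : ℕ) : Wgrp p q →* DihedralGroup p × DihedralGroup p :=
  SemidirectProduct.rightHom

/-- The group `G_Γ ≤ D_p^V × W^R` associated to a graph `Γ = (V, R)`. -/
def GGamma (p q : ℕ) (V : Type*) (R : Set (V × V)) :
    Subgroup ((V → DihedralGroup p) × (R → Wgrp p q)) where
  carrier := {x | ∀ r : R,
    SemidirectProduct.rightHom (x.2 r) = (x.1 (r : V × V).1, x.1 (r : V × V).2)}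
  one_mem' := by intro r; simp; rfl
  mul_mem' := by
    intro a b ha hb r
    simp only [Set.mem_setOf_eq] at ha hb
    simp only [Prod.snd_mul, Pi.mul_apply, map_mul, Prod.fst_mul, ha r, hb r, Prod.mk_mul_mk]
  inv_mem' := by
    intro a ha r
    simp only [Set.mem_setOf_eq] at ha
    simp only [Prod.snd_inv, Pi.inv_apply, map_inv, Prod.fst_inv, ha r, Prod.inv_mk]

instance (n : ℕ) : TopologicalSpace (DihedralGroup n) := ⊥
instance (n : ℕ) : DiscreteTopology (DihedralGroup n) := ⟨rfl⟩
instance (p q : ℕ) : TopologicalSpace (Wgrp p q) := ⊥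
instance (p q : ℕ) : DiscreteTopology (Wgrp p q) := ⟨rfl⟩

variable (p q : ℕ) (V : Type*) (R : Set (V × V))

/-- The coordinate projection `π_v : G_Γ → D_p` at a vertex `v`. -/
def vProj (v : V) : ↥(GGamma p q V R) →* DihedralGroup p :=
  (Pi.evalMonoidHom (fun _ : V => DihedralGroup p) v).comp
    ((MonoidHom.fst _ _).comp (GGamma p q V R).subtype)

/-- The coordinate projection `π_r : G_Γ → W` at an edge `r`. -/
def eProj (r : R) : ↥(GGamma p q V R) →* Wgrp p q :=
  (Pi.evalMonoidHom (fun _ : R => Wgrp p q) r).comp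
    ((MonoidHom.snd _ _).comp (GGamma p q V R).subtype)

variable (I : Type*)

/-- The coordinate projection `π_v : G_Γ × C_2^I → D_p` at a vertex `v`. -/
def vProjK (v : V) : (↥(GGamma p q V R) × (I → ℤˣ)) →* DihedralGroup p :=
  (vProj p q V R v).comp (MonoidHom.fst _ _)

/-- The coordinate projection `π_r : G_Γ × C_2^I → W` at an edge `r`. -/
def eProjK (r : R) : (↥(GGamma p q V R) × (I → ℤˣ)) →* Wgrp p q :=
  (eProj p q V R r).comp (MonoidHom.fst _ _)

/-- The map `ξ_Γ : G_Γ → C_2^V`, `((a_v), (b_r)) ↦ (τ(a_v))_v`. -/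
def xiGamma : ↥(GGamma p q V R) →* (V → ℤˣ) :=
  Pi.monoidHom fun v => (dihedralSign p).comp (vProj p q V R v)

end

lemma aut_rot_to_rot (p : ℕ) (hp : p.Prime) (hpo : Odd p)
    (σ : DihedralGroup p ≃* DihedralGroup p) (i : ZMod p) :
    ∃ j, σ (DihedralGroup.r i) = DihedralGroup.r j := by
  rcases h : σ (DihedralGroup.r i) with j | j
  · exact ⟨j, rfl⟩
  · exfalso
    have h2 : σ (DihedralGroup.r i * DihedralGroup.r i) = 1 := by
      rw [map_mul, h]
      show DihedralGroup.r (j - j) = 1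
      simp [DihedralGroup.one_def, -DihedralGroup.r_zero]
    have h3 : DihedralGroup.r i * DihedralGroup.r i = 1 :=
      σ.injective (h2.trans (map_one σ).symm)
    have h5 : i + i = 0 := by
      have h4 : (DihedralGroup.r (i + i) : DihedralGroup p) = DihedralGroup.r 0 := by
        simpa [DihedralGroup.one_def, -DihedralGroup.r_zero] using h3
      simpa [-DihedralGroup.r_zero] using h4
    have h6 : (2 : ZMod p) * i = 0 := by rw [two_mul]; exact h5
    haveI := Fact.mk hp
    rcases mul_eq_zero.mp h6 with h7 | h7
    · have hd : (p : ℕ) ∣ 2 :=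
        (ZMod.natCast_eq_zero_iff 2 p).mp (by exact_mod_cast h7)
      have hp2 : p = 2 := (Nat.prime_dvd_prime_iff_eq hp Nat.prime_two).mp hd
      rw [hp2] at hpo
      simp [Nat.odd_iff] at hpo
    · rw [h7] at h
      have h1 : σ 1 = 1 := map_one σ
      rw [DihedralGroup.one_def] at h1
      rw [h1] at h
      simp [-DihedralGroup.r_zero] at h

lemma aut_sign (p : ℕ) (hp : p.Prime) (hpo : Odd p)
    (σ : DihedralGroup p ≃* DihedralGroup p) (x : DihedralGroup p) :
    dihedralSign p (σ x) = dihedralSign p x := by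
  cases x with
  | r i =>
    obtain ⟨j, hj⟩ := aut_rot_to_rot p hp hpo σ i
    rw [hj]; rfl
  | sr i =>
    rcases h : σ (DihedralGroup.sr i) with j | j
    · exfalso
      obtain ⟨k, hk⟩ := aut_rot_to_rot p hp hpo σ.symm j
      have hc : DihedralGroup.sr i = DihedralGroup.r k := by
        have := congrArg σ.symm h
        rwa [σ.symm_apply_apply, hk] at this
      simp at hc
    · rfl

lemma Wact_eq (p q : ℕ) (g g' : DihedralGroup p × DihedralGroup p)
    (h1 : dihedralSign p g.1 = dihedralSign p g'.1)
    (h2 : dihedralSign p g.2 = dihedralSign p g'.2) :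
    Wact p q g = Wact p q g' := by
  unfold Wact
  simp only [MonoidHom.comp_apply, MonoidHom.mul_apply]
  congr 1
  exact congrArg₂ (· * ·) h1 h2

/-- For any automorphisms `σ₁, σ₂` of `D_p` there is an automorphism `ν`
of `W = C_q ⋊ (D_p × D_p)` such that `λ ∘ ν = (σ₁ × σ₂) ∘ λ`. -/
theorem statement_12 (p q : ℕ) (hp : p.Prime) (hq : q.Prime) (hpo : Odd p) (hqo : Odd q)
    (hpq : p ≠ q) (σ₁ σ₂ : DihedralGroup p ≃* DihedralGroup p) :
    ∃ ν : Wgrp p q ≃* Wgrp p q, ∀ w : Wgrp p q,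
      lamW p q (ν w) = (σ₁ (lamW p q w).1, σ₂ (lamW p q w).2) := by
  refine ⟨MulEquiv.mk' ⟨fun w => ⟨w.left, (σ₁ w.right.1, σ₂ w.right.2)⟩,
    fun w => ⟨w.left, (σ₁.symm w.right.1, σ₂.symm w.right.2)⟩,
    fun w => by ext <;> simp, fun w => by ext <;> simp⟩ ?_, fun w => rfl⟩
  intro a b
  ext
  · show (a * b).left = a.left * Wact p q (σ₁ a.right.1, σ₂ a.right.2) b.left
    rw [SemidirectProduct.mul_left,
      Wact_eq p q a.right (σ₁ a.right.1, σ₂ a.right.2)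
        (aut_sign p hp hpo σ₁ a.right.1).symm (aut_sign p hp hpo σ₂ a.right.2).symm]
  · show σ₁ (a * b).right.1 =
      (((σ₁ a.right.1, σ₂ a.right.2) : _ × _) * (σ₁ b.right.1, σ₂ b.right.2)).1
    rw [SemidirectProduct.mul_right, Prod.fst_mul, map_mul]; rfl
  · show σ₂ (a * b).right.2 =
      (((σ₁ a.right.1, σ₂ a.right.2) : _ × _) * (σ₁ b.right.1, σ₂ b.right.2)).2
    rw [SemidirectProduct.mul_right, Prod.snd_mul, map_mul]; rfl
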